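/- arXiv:1304.4005 — 6 statements merged into one kernel-verified Lean document; each statement's English description precedes it below -/
import Mathlib

section
/- Let F1 and F2 be distinct points in the plane. Let two rays from F2 intersect a ray from F1 at points h and e respectively, with angles α = ∠F1F2h, β = ∠F1F2e, γ = ∠hF1F2. Let u be a point with ∠F1F2u = φ such that dist(F1,h) − dist(F2,h) = dist(F1,u) − dist(F2,u) and dist(F1,e) + dist(F2,e) = dist(F1,u) + dist(F2,u). Then cos φ = cos((α+β)/2) / cos((α−β)/2); in particular φ depends only on α and β and not on γ. -/
open EuclideanGeometry Real

private lemma trig_aux (α β γ : ℝ) :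
    (Real.sin (α+γ) * Real.sin (β+γ)
        - (Real.sin α - Real.sin γ) * (Real.sin β + Real.sin γ)) * Real.cos ((α-β)/2)
      = ((Real.sin β + Real.sin γ) * Real.sin (α+γ)
        - (Real.sin α - Real.sin γ) * Real.sin (β+γ)) * Real.cos ((α+β)/2) := by
  have e1 : Real.sin (α+γ) = 2 * Real.sin ((α+γ)/2) * Real.cos ((α+γ)/2) := by
    have := Real.sin_two_mul ((α+γ)/2)
    rwa [show 2*((α+γ)/2) = α+γ by ring] at this
  have e2 : Real.sin (β+γ) = 2 * Real.sin ((β+γ)/2) * Real.cos ((β+γ)/2) := by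
    have := Real.sin_two_mul ((β+γ)/2)
    rwa [show 2*((β+γ)/2) = β+γ by ring] at this
  have e3 : Real.sin α - Real.sin γ = 2 * Real.sin ((α-γ)/2) * Real.cos ((α+γ)/2) :=
    Real.sin_sub_sin α γ
  have e4 : Real.sin β + Real.sin γ = 2 * Real.sin ((β+γ)/2) * Real.cos ((β-γ)/2) := by
    have := Real.sin_sub_sin β (-γ)
    rw [Real.sin_neg, show (β - -γ)/2 = (β+γ)/2 by ring, show (β + -γ)/2 = (β-γ)/2 by ring] at this
    linarith
  rw [e1, e2, e3, e4,
    show (α+γ)/2 = α/2 + γ/2 by ring, show (β+γ)/2 = β/2 + γ/2 by ring,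
    show (α-γ)/2 = α/2 - γ/2 by ring, show (β-γ)/2 = β/2 - γ/2 by ring,
    show (α-β)/2 = α/2 - β/2 by ring, show (α+β)/2 = α/2 + β/2 by ring]
  simp only [Real.sin_add, Real.cos_add, Real.sin_sub, Real.cos_sub]
  ring

theorem stmt0
    (F1 F2 h e u : EuclideanSpace ℝ (Fin 2))
    (α β γ φ : ℝ)
    (hF : F1 ≠ F2)
    (hh1 : h ≠ F1) (hh2 : h ≠ F2) (he1 : e ≠ F1) (he2 : e ≠ F2)
    (hu1 : u ≠ F1) (hu2 : u ≠ F2)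
    (hray : SameRay ℝ (h - F1) (e - F1))  -- h and e lie on a common ray from F1
    (hα : α = ∠ F1 F2 h) (hβ : β = ∠ F1 F2 e) (hγ : γ = ∠ h F1 F2)
    (hφ : φ = ∠ F1 F2 u)
    (hα0 : 0 < α) (hαπ : α < π) (hβ0 : 0 < β) (hβπ : β < π)
    (hγ0 : 0 < γ) (hγπ : γ < π)
    (hαγ : α + γ < π) (hβγ : β + γ < π)
    (hhyp : dist F1 h - dist F2 h = dist F1 u - dist F2 u)
    (hell : dist F1 e + dist F2 e = dist F1 u + dist F2 u) :
    Real.cos φ = Real.cos ((α + β) / 2) / Real.cos ((α - β) / 2) := by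
  -- the angle ∠ e F1 F2 equals γ, since e is on the same ray from F1 as h
  have hγe : ∠ e F1 F2 = ∠ h F1 F2 := by
    obtain ⟨r, hr0, hre⟩ := hray.exists_pos_left (sub_ne_zero.2 hh1) (sub_ne_zero.2 he1)
    have hv : (e -ᵥ F1 : EuclideanSpace ℝ (Fin 2)) = r • (h -ᵥ F1) := by
      rw [vsub_eq_sub, vsub_eq_sub, ← hre]
    show InnerProductGeometry.angle (e -ᵥ F1) (F2 -ᵥ F1)
        = InnerProductGeometry.angle (h -ᵥ F1) (F2 -ᵥ F1)
    rw [hv, InnerProductGeometry.angle_smul_left_of_pos _ _ hr0]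
  -- law of cosines instances
  have lc1 := EuclideanGeometry.law_cos F1 F2 h
  rw [dist_comm h F2, ← hα] at lc1
  have lc2 := EuclideanGeometry.law_cos F2 F1 h
  rw [dist_comm F2 F1, dist_comm h F1, EuclideanGeometry.angle_comm F2 F1 h, ← hγ] at lc2
  have lc3 := EuclideanGeometry.law_cos F1 F2 e
  rw [dist_comm e F2, ← hβ] at lc3
  have lc4 := EuclideanGeometry.law_cos F2 F1 e
  rw [dist_comm F2 F1, dist_comm e F1, EuclideanGeometry.angle_comm F2 F1 e, hγe, ← hγ] at lc4
  have lc5 := EuclideanGeometry.law_cos F1 F2 u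
  rw [dist_comm u F2, ← hφ] at lc5
  set c := dist F1 F2 with hc_def
  set P := dist F1 h with hP_def
  set Q := dist F2 h with hQ_def
  set P' := dist F1 e with hP'_def
  set Q' := dist F2 e with hQ'_def
  set R1 := dist F1 u with hR1_def
  set R2 := dist F2 u with hR2_def
  have hc : 0 < c := dist_pos.mpr hF
  have hR2pos : 0 < R2 := dist_pos.mpr (Ne.symm hu2)
  have sα : 0 < Real.sin α := Real.sin_pos_of_pos_of_lt_pi hα0 hαπ
  have sβ : 0 < Real.sin β := Real.sin_pos_of_pos_of_lt_pi hβ0 hβπ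
  have sγ : 0 < Real.sin γ := Real.sin_pos_of_pos_of_lt_pi hγ0 hγπ
  have sAG : 0 < Real.sin (α+γ) := Real.sin_pos_of_pos_of_lt_pi (by linarith) hαγ
  have sBG : 0 < Real.sin (β+γ) := Real.sin_pos_of_pos_of_lt_pi (by linarith) hβγ
  have pgα : Real.sin α ^ 2 = 1 - Real.cos α ^ 2 := by
    have := Real.sin_sq_add_cos_sq α; linarith
  have pgβ : Real.sin β ^ 2 = 1 - Real.cos β ^ 2 := by
    have := Real.sin_sq_add_cos_sq β; linarith
  have pgγ : Real.sin γ ^ 2 = 1 - Real.cos γ ^ 2 := by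
    have := Real.sin_sq_add_cos_sq γ; linarith
  -- triangle F1 F2 h
  have key1h : P * Real.cos γ + Q * Real.cos α = c := by
    have h' : 2*c*(P*Real.cos γ + Q*Real.cos α - c) = 0 := by linear_combination lc1 + lc2
    rcases mul_eq_zero.mp h' with h'' | h''
    · exfalso; linarith
    · linarith
  have key2h : (P * Real.sin γ)^2 = (Q * Real.sin α)^2 := by
    linear_combination (P^2) * pgγ - (Q^2) * pgα + lc1
      - (P*Real.cos γ - Q*Real.cos α + c) * key1h
  have key3h : P * Real.sin γ = Q * Real.sin α :=
    (sq_eq_sq₀ (mul_nonneg dist_nonneg sγ.le) (mul_nonneg dist_nonneg sα.le)).mp key2h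
  have hPd : P * Real.sin (α+γ) = c * Real.sin α := by
    rw [Real.sin_add]; linear_combination Real.sin α * key1h + Real.cos α * key3h
  have hQd : Q * Real.sin (α+γ) = c * Real.sin γ := by
    rw [Real.sin_add]; linear_combination Real.sin γ * key1h - Real.cos γ * key3h
  -- triangle F1 F2 e
  have key1e : P' * Real.cos γ + Q' * Real.cos β = c := by
    have h' : 2*c*(P'*Real.cos γ + Q'*Real.cos β - c) = 0 := by linear_combination lc3 + lc4
    rcases mul_eq_zero.mp h' with h'' | h''
    · exfalso; linarith
    · linarith
  have key2e : (P' * Real.sin γ)^2 = (Q' * Real.sin β)^2 := by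
    linear_combination (P'^2) * pgγ - (Q'^2) * pgβ + lc3
      - (P'*Real.cos γ - Q'*Real.cos β + c) * key1e
  have key3e : P' * Real.sin γ = Q' * Real.sin β :=
    (sq_eq_sq₀ (mul_nonneg dist_nonneg sγ.le) (mul_nonneg dist_nonneg sβ.le)).mp key2e
  have hPe : P' * Real.sin (β+γ) = c * Real.sin β := by
    rw [Real.sin_add]; linear_combination Real.sin β * key1e + Real.cos β * key3e
  have hQe : Q' * Real.sin (β+γ) = c * Real.sin γ := by
    rw [Real.sin_add]; linear_combination Real.sin γ * key1e - Real.cos γ * key3e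
  -- combined side-length relations
  have hd : (P - Q) * Real.sin (α+γ) = c * (Real.sin α - Real.sin γ) := by
    linear_combination hPd - hQd
  have hs : (P' + Q') * Real.sin (β+γ) = c * (Real.sin β + Real.sin γ) := by
    linear_combination hPe + hQe
  -- the point u
  have hprod : (P - Q)*(P' + Q') = (R1 - R2)*(R1 + R2) := by rw [hhyp, hell]
  have hu : 2*c*R2*Real.cos φ = c^2 - (P - Q)*(P' + Q') := by
    linear_combination lc5 + hprod
  have h2R2 : P' + Q' - (P - Q) = 2*R2 := by linarith
  -- trig identity
  have trig := trig_aux α β γ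
  have hmul : ((c^2 - (P-Q)*(P'+Q')) * Real.cos ((α-β)/2)) * (Real.sin (α+γ) * Real.sin (β+γ))
      = (c * ((P'+Q') - (P-Q)) * Real.cos ((α+β)/2)) * (Real.sin (α+γ) * Real.sin (β+γ)) := by
    have hds : ((P - Q) * Real.sin (α+γ)) * ((P' + Q') * Real.sin (β+γ))
        = (c * (Real.sin α - Real.sin γ)) * (c * (Real.sin β + Real.sin γ)) := by rw [hd, hs]
    linear_combination (c^2) * trig - Real.cos ((α-β)/2) * hds
      - (Real.cos ((α+β)/2) * c * Real.sin (α+γ)) * hs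
      + (Real.cos ((α+β)/2) * c * Real.sin (β+γ)) * hd
  have main : (c^2 - (P-Q)*(P'+Q')) * Real.cos ((α-β)/2)
      = c * ((P'+Q') - (P-Q)) * Real.cos ((α+β)/2) :=
    mul_right_cancel₀ (by positivity) hmul
  have hY : 0 < Real.cos ((α-β)/2) := by
    refine Real.cos_pos_of_mem_Ioo ⟨by linarith, by linarith⟩
  rw [eq_div_iff hY.ne']
  have final : (Real.cos φ * Real.cos ((α-β)/2)) * (2*c*R2)
      = Real.cos ((α+β)/2) * (2*c*R2) := by
    linear_combination Real.cos ((α-β)/2) * hu + main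
      + (c * Real.cos ((α+β)/2)) * h2R2
  exact mul_right_cancel₀ (by positivity) final
end

section
/- Lemma 1(a): Let F1, F2 be distinct points in the plane. Let two rays from F1 intersect two rays from F2 in four points e1, e2, h1, h2, where e1, h1 lie on one ray from F1 and e2, h2 on the other, e1, e2 on one ray from F2 and h1, h2 on the other. Let E1, E2 be the ellipses with foci F1, F2 through e1, e2 respectively, and H1, H2 the branches of hyperbolas with foci F1, F2 through h1, h2 respectively (each branch around F2). If p is a point of intersection of E1 and H1 and q is a point of intersection of E2 and H2 (on the corresponding sides), then p, q, and F2 are collinear. -/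
open EuclideanGeometry

noncomputable section Stmt2Aux

private abbrev E2' := EuclideanSpace ℝ (Fin 2)

private def kv (F1 F2 x : E2') : ℝ := (F1 0 - F2 0) * (x 1 - F2 1) - (F1 1 - F2 1) * (x 0 - F2 0)
private def Qv (F1 F2 x : E2') : ℝ := (x 0 - F2 0) * (F1 0 - F2 0) + (x 1 - F2 1) * (F1 1 - F2 1)
private def Pv (F1 F2 x : E2') : ℝ := (x 0 - F1 0) * (F2 0 - F1 0) + (x 1 - F1 1) * (F2 1 - F1 1)
private def Gv (F1 F2 x : E2') : ℝ := kv F1 F2 x / (dist x F2 * dist F1 F2 + Qv F1 F2 x)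
private def Bv (F1 F2 x : E2') : ℝ := kv F1 F2 x / (dist x F1 * dist F1 F2 + Pv F1 F2 x)

private lemma dist_sq' (x y : E2') : dist x y ^ 2 = (x 0 - y 0)^2 + (x 1 - y 1)^2 := by
  rw [EuclideanSpace.dist_eq, Real.sq_sqrt (by positivity)]
  simp [Fin.sum_univ_two, Real.dist_eq, sq_abs]

private lemma ptCore (a b d P Q k : ℝ) (hd : 0 < d)
    (t1 : d ≤ a + b) (t2 : b ≤ a + d) (t3 : a ≤ b + d)
    (hP : 2*P = a^2 + d^2 - b^2) (hQ : 2*Q = b^2 + d^2 - a^2)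
    (hk2 : k^2 = b^2*d^2 - Q^2) (hk : k ≠ 0) :
    0 < a ∧ 0 < b ∧ 0 < b*d + Q ∧
    0 < (a+b) - d ∧ 0 < d + (a-b) ∧ 0 < d - (a-b) ∧
    ((a+b) - d = (k/(a*d+P)) * (k/(b*d+Q)) * ((a+b) + d)) ∧
    ((k/(a*d+P)) * ((a-b) + d) = (k/(b*d+Q)) * (d - (a-b))) ∧
    (k * (1 + (k/(b*d+Q))^2) = 2 * (k/(b*d+Q)) * (b*d)) ∧
    (Q * (1 + (k/(b*d+Q))^2) = (1 - (k/(b*d+Q))^2) * (b*d)) := by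
  have hk2' : 4*k^2 = (a+b+d)*(b+d-a)*(a+d-b)*(a+b-d) := by linear_combination 4*hk2 - (2*Q + (b^2+d^2-a^2))*hQ
  have hkpos : 0 < k^2 := by positivity
  have f1 : 0 ≤ b+d-a := by linarith
  have f2 : 0 ≤ a+d-b := by linarith
  have f3 : 0 ≤ a+b-d := by linarith
  have g1 : 0 < b+d-a := by
    rcases f1.lt_or_eq with h | h
    · exact h
    · exfalso; rw [← h] at hk2'; nlinarith [hkpos]
  have g2 : 0 < a+d-b := by
    rcases f2.lt_or_eq with h | h
    · exact h
    · exfalso; rw [← h] at hk2'; nlinarith [hkpos]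
  have g3 : 0 < a+b-d := by
    rcases f3.lt_or_eq with h | h
    · exact h
    · exfalso; rw [← h] at hk2'; nlinarith [hkpos]
  have ha : 0 < a := by linarith
  have hb : 0 < b := by linarith
  have hADP : 0 < a*d + P := by nlinarith [mul_pos g2 (show 0 < a+d+b by linarith)]
  have hBDQ : 0 < b*d + Q := by nlinarith [mul_pos g1 (show 0 < b+d+a by linarith)]
  obtain ⟨AD, hAD⟩ : ∃ x : ℝ, a*d + P = x := ⟨_, rfl⟩
  obtain ⟨BD, hBD⟩ : ∃ x : ℝ, b*d + Q = x := ⟨_, rfl⟩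
  rw [hAD, hBD]
  rw [hAD] at hADP; rw [hBD] at hBDQ
  have hADrel : 2*AD = (a+d)^2 - b^2 := by rw [← hAD]; linarith
  have hBDrel : 2*BD = (b+d)^2 - a^2 := by rw [← hBD]; linarith
  have hQ2 : Q = BD - b*d := by rw [← hBD]; ring
  have hkrel : k^2 = 2*(b*d)*BD - BD^2 := by rw [hQ2] at hk2; linear_combination hk2
  have hADne : AD ≠ 0 := hADP.ne'
  have hBDne : BD ≠ 0 := hBDQ.ne'
  refine ⟨ha, hb, hBDQ, by linarith, by linarith, by linarith, ?_, ?_, ?_, ?_⟩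
  · field_simp
    linear_combination (-(a+b+d))*hkrel + ((a+b-d)*BD/2)*hADrel + (BD*(a+b+d)/2)*hBDrel
  · field_simp
    linear_combination ((a-b+d)/2)*hBDrel - ((d-a+b)/2)*hADrel
  · field_simp
    linear_combination hkrel
  · rw [hQ2]
    field_simp
    linear_combination BD*hkrel

private lemma point_facts (F1 F2 x : E2') (hF : F1 ≠ F2) (hk : kv F1 F2 x ≠ 0) :
    0 < dist x F1 ∧ 0 < dist x F2 ∧
    0 < dist x F2 * dist F1 F2 + Qv F1 F2 x ∧
    0 < (dist x F1 + dist x F2) - dist F1 F2 ∧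
    0 < dist F1 F2 + (dist x F1 - dist x F2) ∧
    0 < dist F1 F2 - (dist x F1 - dist x F2) ∧
    ((dist x F1 + dist x F2) - dist F1 F2
      = Bv F1 F2 x * Gv F1 F2 x * ((dist x F1 + dist x F2) + dist F1 F2)) ∧
    (Bv F1 F2 x * ((dist x F1 - dist x F2) + dist F1 F2)
      = Gv F1 F2 x * (dist F1 F2 - (dist x F1 - dist x F2))) ∧
    (kv F1 F2 x * (1 + Gv F1 F2 x ^ 2) = 2 * Gv F1 F2 x * (dist x F2 * dist F1 F2)) ∧
    (Qv F1 F2 x * (1 + Gv F1 F2 x ^ 2) = (1 - Gv F1 F2 x ^ 2) * (dist x F2 * dist F1 F2)) := by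
  have hd : 0 < dist F1 F2 := dist_pos.2 hF
  have t1 : dist F1 F2 ≤ dist x F1 + dist x F2 := by
    rw [dist_comm x F1]; exact dist_triangle F1 x F2
  have t2 : dist x F2 ≤ dist x F1 + dist F1 F2 := dist_triangle x F1 F2
  have t3 : dist x F1 ≤ dist x F2 + dist F1 F2 := by
    rw [dist_comm F1 F2]; exact dist_triangle x F2 F1
  have hP : 2 * Pv F1 F2 x = dist x F1 ^2 + dist F1 F2 ^2 - dist x F2 ^2 := by
    rw [dist_sq', dist_sq', dist_sq']; simp only [Pv]; ring
  have hQ : 2 * Qv F1 F2 x = dist x F2 ^2 + dist F1 F2 ^2 - dist x F1 ^2 := by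
    rw [dist_sq', dist_sq', dist_sq']; simp only [Qv]; ring
  have hk2 : kv F1 F2 x ^2 = dist x F2 ^2 * dist F1 F2 ^2 - Qv F1 F2 x ^2 := by
    rw [dist_sq', dist_sq']; simp only [kv, Qv]; ring
  have := ptCore (dist x F1) (dist x F2) (dist F1 F2) (Pv F1 F2 x) (Qv F1 F2 x) (kv F1 F2 x)
    hd t1 t2 t3 hP hQ hk2 hk
  simpa only [Gv, Bv] using this

private lemma vec_comp (v w : E2') (c : ℝ) (h : v = c • w) :
    v 0 = c * w 0 ∧ v 1 = c * w 1 :=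
  ⟨by rw [h]; simp, by rw [h]; simp⟩


private lemma e2_ext (v w : E2') (h0 : v 0 = w 0) (h1 : v 1 = w 1) : v = w := by
  ext i
  fin_cases i
  · exact h0
  · exact h1

private lemma scale_F2 (F1 F2 x y : E2') (n : ℝ) (hn : 0 < n) (h : y - F2 = n • (x - F2)) :
    dist y F2 = n * dist x F2 ∧ Qv F1 F2 y = n * Qv F1 F2 x ∧ kv F1 F2 y = n * kv F1 F2 x ∧
    Gv F1 F2 y = Gv F1 F2 x := by
  obtain ⟨h0, h1⟩ := vec_comp _ _ _ h
  simp only [PiLp.sub_apply] at h0 h1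
  have hb : dist y F2 = n * dist x F2 := by
    rw [dist_eq_norm, dist_eq_norm, h, norm_smul, Real.norm_eq_abs, abs_of_pos hn]
  have hQ : Qv F1 F2 y = n * Qv F1 F2 x := by simp only [Qv]; rw [h0, h1]; ring
  have hkk : kv F1 F2 y = n * kv F1 F2 x := by simp only [kv]; rw [h0, h1]; ring
  refine ⟨hb, hQ, hkk, ?_⟩
  simp only [Gv]
  rw [hb, hQ, hkk, show n * dist x F2 * dist F1 F2 + n * Qv F1 F2 x
      = n * (dist x F2 * dist F1 F2 + Qv F1 F2 x) by ring,
    mul_div_mul_left _ _ hn.ne']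

private lemma scale_F1 (F1 F2 x y : E2') (m : ℝ) (hm : 0 < m) (h : y - F1 = m • (x - F1)) :
    kv F1 F2 y = m * kv F1 F2 x ∧ Bv F1 F2 y = Bv F1 F2 x := by
  obtain ⟨h0, h1⟩ := vec_comp _ _ _ h
  simp only [PiLp.sub_apply] at h0 h1
  have hy0 : y 0 = F1 0 + m * (x 0 - F1 0) := by linarith
  have hy1 : y 1 = F1 1 + m * (x 1 - F1 1) := by linarith
  have ha : dist y F1 = m * dist x F1 := by
    rw [dist_eq_norm, dist_eq_norm,
      show y - F1 = m • (x - F1) from h, norm_smul, Real.norm_eq_abs, abs_of_pos hm]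
  have hPp : Pv F1 F2 y = m * Pv F1 F2 x := by simp only [Pv]; rw [hy0, hy1]; ring
  have hkk : kv F1 F2 y = m * kv F1 F2 x := by simp only [kv]; rw [hy0, hy1]; ring
  refine ⟨hkk, ?_⟩
  simp only [Bv]
  rw [ha, hPp, hkk, show m * dist x F1 * dist F1 F2 + m * Pv F1 F2 x
      = m * (dist x F1 * dist F1 F2 + Pv F1 F2 x) by ring,
    mul_div_mul_left _ _ hm.ne']

private lemma mem_line_of_kv_eq_zero (F1 F2 x : E2') (hF : F1 ≠ F2) (h : kv F1 F2 x = 0) :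
    x ∈ affineSpan ℝ ({F1, F2} : Set E2') := by
  have hd : 0 < dist F1 F2 := dist_pos.2 hF
  have hnrm : (0:ℝ) < (F1 0 - F2 0)^2 + (F1 1 - F2 1)^2 := by
    rw [← dist_sq' F1 F2]; positivity
  have hx : x = (x -ᵥ F2) +ᵥ F2 := by simp
  rw [hx, vadd_right_mem_affineSpan_pair]
  refine ⟨Qv F1 F2 x / ((F1 0 - F2 0)^2 + (F1 1 - F2 1)^2), ?_⟩
  apply e2_ext
  · simp only [vsub_eq_sub, PiLp.smul_apply, PiLp.sub_apply, smul_eq_mul]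
    rw [div_mul_eq_mul_div, div_eq_iff hnrm.ne']
    simp only [kv, Qv] at h ⊢
    linear_combination (F1 1 - F2 1) * h
  · simp only [vsub_eq_sub, PiLp.smul_apply, PiLp.sub_apply, smul_eq_mul]
    rw [div_mul_eq_mul_div, div_eq_iff hnrm.ne']
    simp only [kv, Qv] at h ⊢
    linear_combination (-(F1 0 - F2 0)) * h

private lemma side_facts (F1 F2 x y : E2') (hF : F1 ≠ F2)
    (h : (affineSpan ℝ ({F1, F2} : Set E2')).SSameSide x y) :
    0 < kv F1 F2 x * kv F1 F2 y := by
  obtain ⟨⟨p1, hp1, p2, hp2, hray⟩, hx, hy⟩ := h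
  have hkx : kv F1 F2 x ≠ 0 := fun hz => hx (mem_line_of_kv_eq_zero F1 F2 x hF hz)
  have hxp1 : x -ᵥ p1 ≠ 0 := by
    rw [vsub_ne_zero]; rintro rfl; exact hx hp1
  have hyp2 : y -ᵥ p2 ≠ 0 := by
    rw [vsub_ne_zero]; rintro rfl; exact hy hp2
  obtain ⟨r, hr, hrw⟩ := hray.exists_pos_left hxp1 hyp2
  rw [show p1 = (p1 -ᵥ F2) +ᵥ F2 from by simp, vadd_right_mem_affineSpan_pair] at hp1
  obtain ⟨c1, hc1⟩ := hp1
  rw [show p2 = (p2 -ᵥ F2) +ᵥ F2 from by simp, vadd_right_mem_affineSpan_pair] at hp2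
  obtain ⟨c2, hc2⟩ := hp2
  simp only [vsub_eq_sub] at hrw hc1 hc2
  obtain ⟨ha0, ha1⟩ := vec_comp _ _ _ hrw.symm
  obtain ⟨hb0, hb1⟩ := vec_comp _ _ _ hc1.symm
  obtain ⟨hc0, hc1'⟩ := vec_comp _ _ _ hc2.symm
  simp only [PiLp.sub_apply] at ha0 ha1 hb0 hb1 hc0 hc1'
  have hky : kv F1 F2 y = r * kv F1 F2 x := by
    simp only [kv]
    linear_combination (F1 0 - F2 0) * ha1 - (F1 1 - F2 1) * ha0
      + (F1 0 - F2 0) * hc1' - (F1 1 - F2 1) * hc0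
      - (r * (F1 0 - F2 0)) * hb1 + (r * (F1 1 - F2 1)) * hb0
  rw [hky]
  have : 0 < kv F1 F2 x ^ 2 := by positivity
  nlinarith [this, hr]

end Stmt2Aux

set_option maxHeartbeats 2000000 in
theorem stmt2
    (F1 F2 e1 e2 h1 h2 p q : EuclideanSpace ℝ (Fin 2))
    (hF : F1 ≠ F2)
    (hne : e1 ≠ F1 ∧ e1 ≠ F2 ∧ e2 ≠ F1 ∧ e2 ≠ F2 ∧ h1 ≠ F1 ∧ h1 ≠ F2 ∧ h2 ≠ F1 ∧ h2 ≠ F2)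
    (hdist : e1 ≠ e2 ∧ e1 ≠ h1 ∧ e1 ≠ h2 ∧ e2 ≠ h1 ∧ e2 ≠ h2 ∧ h1 ≠ h2)
    -- e1, h1 on one ray from F1; e2, h2 on the other ray from F1
    (hrayF1a : SameRay ℝ (e1 - F1) (h1 - F1))
    (hrayF1b : SameRay ℝ (e2 - F1) (h2 - F1))
    -- e1, e2 on one ray from F2; h1, h2 on the other ray from F2
    (hrayF2a : SameRay ℝ (e1 - F2) (e2 - F2))
    (hrayF2b : SameRay ℝ (h1 - F2) (h2 - F2))
    -- nondegeneracy: all rays off the line F1F2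
    (hside : (affineSpan ℝ {F1, F2}).SSameSide e1 h1 ∧
             (affineSpan ℝ {F1, F2}).SSameSide e1 p ∧
             (affineSpan ℝ {F1, F2}).SSameSide e1 q)
    -- p is on the ellipse through e1 and the hyperbola branch through h1
    (hpE : dist p F1 + dist p F2 = dist e1 F1 + dist e1 F2)
    (hpH : dist p F1 - dist p F2 = dist h1 F1 - dist h1 F2)
    -- q is on the ellipse through e2 and the hyperbola branch through h2
    (hqE : dist q F1 + dist q F2 = dist e2 F1 + dist e2 F2)
    (hqH : dist q F1 - dist q F2 = dist h2 F1 - dist h2 F2) :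
    Collinear ℝ ({p, q, F2} : Set (EuclideanSpace ℝ (Fin 2))) := by
  obtain ⟨he1F1, he1F2, he2F1, he2F2, hh1F1, hh1F2, hh2F1, hh2F2⟩ := hne
  obtain ⟨hse1h1, hse1p, hse1q⟩ := hside
  have hd : 0 < dist F1 F2 := dist_pos.2 hF
  obtain ⟨m1, hm1, hm1w⟩ := hrayF1a.exists_pos_left (sub_ne_zero.2 he1F1) (sub_ne_zero.2 hh1F1)
  obtain ⟨m2, hm2, hm2w⟩ := hrayF1b.exists_pos_left (sub_ne_zero.2 he2F1) (sub_ne_zero.2 hh2F1)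
  obtain ⟨n1, hn1, hn1w⟩ := hrayF2a.exists_pos_left (sub_ne_zero.2 he1F2) (sub_ne_zero.2 he2F2)
  obtain ⟨n2, hn2, hn2w⟩ := hrayF2b.exists_pos_left (sub_ne_zero.2 hh1F2) (sub_ne_zero.2 hh2F2)
  obtain ⟨hkh1, hBh1⟩ := scale_F1 F1 F2 e1 h1 m1 hm1 hm1w.symm
  obtain ⟨hkh2, hBh2⟩ := scale_F1 F1 F2 e2 h2 m2 hm2 hm2w.symm
  obtain ⟨hbe2, hQe2, hke2, hGe2⟩ := scale_F2 F1 F2 e1 e2 n1 hn1 hn1w.symm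
  obtain ⟨hbh2, hQh2, hkh2', hGh2⟩ := scale_F2 F1 F2 h1 h2 n2 hn2 hn2w.symm
  have hs1 := side_facts F1 F2 e1 h1 hF hse1h1
  have hs2 := side_facts F1 F2 e1 p hF hse1p
  have hs3 := side_facts F1 F2 e1 q hF hse1q
  have hke : kv F1 F2 e1 ≠ 0 := by intro hz; rw [hz, zero_mul] at hs1; exact lt_irrefl 0 hs1
  have hkh1ne : kv F1 F2 h1 ≠ 0 := by intro hz; rw [hz, mul_zero] at hs1; exact lt_irrefl 0 hs1
  have hkp : kv F1 F2 p ≠ 0 := by intro hz; rw [hz, mul_zero] at hs2; exact lt_irrefl 0 hs2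
  have hkq : kv F1 F2 q ≠ 0 := by intro hz; rw [hz, mul_zero] at hs3; exact lt_irrefl 0 hs3
  have hke2ne : kv F1 F2 e2 ≠ 0 := by rw [hke2]; exact mul_ne_zero hn1.ne' hke
  have hkh2ne : kv F1 F2 h2 ≠ 0 := by rw [hkh2']; exact mul_ne_zero hn2.ne' hkh1ne
  obtain ⟨-, -, -, hSe1, -, -, e1eq1, -, -, -⟩ := point_facts F1 F2 e1 hF hke
  obtain ⟨-, -, -, hSe2, -, -, e2eq1, -, -, -⟩ := point_facts F1 F2 e2 hF hke2ne
  obtain ⟨-, -, -, -, -, hTh1, -, h1eq2, -, -⟩ := point_facts F1 F2 h1 hF hkh1ne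
  obtain ⟨-, -, -, -, -, hTh2, -, h2eq2, -, -⟩ := point_facts F1 F2 h2 hF hkh2ne
  obtain ⟨-, hbp, hDp, -, -, -, peq1, peq2, peq3, peq4⟩ := point_facts F1 F2 p hF hkp
  obtain ⟨-, hbq, hDq, -, -, -, qeq1, qeq2, qeq3, qeq4⟩ := point_facts F1 F2 q hF hkq
  rw [hpE] at peq1
  rw [hpH] at peq2
  rw [hqE] at qeq1
  rw [hqH] at qeq2
  have hSd1 : (0:ℝ) < (dist e1 F1 + dist e1 F2) + dist F1 F2 := by linarith
  have hSd2 : (0:ℝ) < (dist e2 F1 + dist e2 F2) + dist F1 F2 := by linarith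
  have hBGp : Bv F1 F2 p * Gv F1 F2 p = Bv F1 F2 e1 * Gv F1 F2 e1 :=
    mul_right_cancel₀ hSd1.ne' (by linarith [peq1, e1eq1])
  have hBGq : Bv F1 F2 q * Gv F1 F2 q = Bv F1 F2 e2 * Gv F1 F2 e2 :=
    mul_right_cancel₀ hSd2.ne' (by linarith [qeq1, e2eq1])
  rw [hBh1] at h1eq2
  rw [hBh2] at h2eq2
  have hGp2 : Gv F1 F2 p ^2 * (dist F1 F2 - (dist h1 F1 - dist h1 F2))
      = (Gv F1 F2 e1 * Gv F1 F2 h1) * (dist F1 F2 - (dist h1 F1 - dist h1 F2)) := by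
    linear_combination (-(Gv F1 F2 p))*peq2 + (Gv F1 F2 e1)*h1eq2
      + ((dist h1 F1 - dist h1 F2) + dist F1 F2)*hBGp
  have hGq2 : Gv F1 F2 q ^2 * (dist F1 F2 - (dist h2 F1 - dist h2 F2))
      = (Gv F1 F2 e2 * Gv F1 F2 h2) * (dist F1 F2 - (dist h2 F1 - dist h2 F2)) := by
    linear_combination (-(Gv F1 F2 q))*qeq2 + (Gv F1 F2 e2)*h2eq2
      + ((dist h2 F1 - dist h2 F2) + dist F1 F2)*hBGq
  have hGp2' : Gv F1 F2 p ^2 = Gv F1 F2 e1 * Gv F1 F2 h1 := mul_right_cancel₀ hTh1.ne' hGp2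
  have hGq2' : Gv F1 F2 q ^2 = Gv F1 F2 e2 * Gv F1 F2 h2 := mul_right_cancel₀ hTh2.ne' hGq2
  rw [hGe2, hGh2] at hGq2'
  have hGsq : Gv F1 F2 p ^2 = Gv F1 F2 q ^2 := by rw [hGp2', hGq2']
  have hkpq : 0 < kv F1 F2 p * kv F1 F2 q := by
    have hprod := mul_pos hs2 hs3
    have hke2 : 0 < kv F1 F2 e1 ^ 2 := by positivity
    have hrw : kv F1 F2 p * kv F1 F2 q
        = ((kv F1 F2 e1 * kv F1 F2 p) * (kv F1 F2 e1 * kv F1 F2 q)) / kv F1 F2 e1 ^ 2 := by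
      field_simp
    rw [hrw]
    exact div_pos hprod hke2
  have hGpq : 0 < Gv F1 F2 p * Gv F1 F2 q := by
    simp only [Gv]; rw [div_mul_div_comm]; exact div_pos hkpq (mul_pos hDp hDq)
  have hGpGq : Gv F1 F2 p = Gv F1 F2 q := by
    have hfac : (Gv F1 F2 p - Gv F1 F2 q) * (Gv F1 F2 p + Gv F1 F2 q) = 0 := by
      linear_combination hGsq
    rcases mul_eq_zero.1 hfac with h | h
    · linarith [sub_eq_zero.1 h]
    · exfalso
      have hGp : Gv F1 F2 p = -Gv F1 F2 q := by linarith
      rw [hGp] at hGpq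
      have := mul_self_nonneg (Gv F1 F2 q)
      linarith [hGpq]
  rw [hGpGq] at peq3 peq4
  have h1G : (0:ℝ) < 1 + Gv F1 F2 q ^2 := by positivity
  have hkb : kv F1 F2 p * dist q F2 = kv F1 F2 q * dist p F2 :=
    mul_right_cancel₀ h1G.ne' (by linear_combination (dist q F2)*peq3 - (dist p F2)*qeq3)
  have hQb : Qv F1 F2 p * dist q F2 = Qv F1 F2 q * dist p F2 :=
    mul_right_cancel₀ h1G.ne' (by linear_combination (dist q F2)*peq4 - (dist p F2)*qeq4)
  have hnrm : (0:ℝ) < (F1 0 - F2 0)^2 + (F1 1 - F2 1)^2 := by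
    rw [← dist_sq' F1 F2]; positivity
  have c0 : ∀ x : E2', (x 0 - F2 0) * ((F1 0 - F2 0)^2 + (F1 1 - F2 1)^2)
      = Qv F1 F2 x * (F1 0 - F2 0) - kv F1 F2 x * (F1 1 - F2 1) := by
    intro x; simp only [Qv, kv]; ring
  have c1 : ∀ x : E2', (x 1 - F2 1) * ((F1 0 - F2 0)^2 + (F1 1 - F2 1)^2)
      = Qv F1 F2 x * (F1 1 - F2 1) + kv F1 F2 x * (F1 0 - F2 0) := by
    intro x; simp only [Qv, kv]; ring
  have hcomp0 : (q 0 - F2 0) * dist p F2 = (p 0 - F2 0) * dist q F2 := by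
    apply mul_right_cancel₀ hnrm.ne'
    linear_combination (dist p F2) * (c0 q) - (dist q F2) * (c0 p)
      - (F1 0 - F2 0) * hQb + (F1 1 - F2 1) * hkb
  have hcomp1 : (q 1 - F2 1) * dist p F2 = (p 1 - F2 1) * dist q F2 := by
    apply mul_right_cancel₀ hnrm.ne'
    linear_combination (dist p F2) * (c1 q) - (dist q F2) * (c1 p)
      - (F1 1 - F2 1) * hQb - (F1 0 - F2 0) * hkb
  have hvec : q - F2 = (dist q F2 / dist p F2) • (p - F2) := by
    apply e2_ext
    · simp only [PiLp.sub_apply, PiLp.smul_apply, smul_eq_mul]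
      rw [div_mul_eq_mul_div, eq_div_iff hbp.ne']
      linear_combination hcomp0
    · simp only [PiLp.sub_apply, PiLp.smul_apply, smul_eq_mul]
      rw [div_mul_eq_mul_div, eq_div_iff hbp.ne']
      linear_combination hcomp1
  rw [collinear_iff_of_mem
    (show F2 ∈ ({p, q, F2} : Set (EuclideanSpace ℝ (Fin 2))) by simp)]
  refine ⟨p - F2, fun x hx => ?_⟩
  rcases hx with rfl | rfl | rfl
  · exact ⟨1, by simp⟩
  · exact ⟨dist x F2 / dist p F2, by rw [← hvec]; simp⟩
  · exact ⟨0, by simp⟩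
end

section
/- Lemma 1(b): Let F1, F2 be distinct points in the plane, and let u1, u2 be two points on a common ray from F2. Let E1 and H1 be the ellipse and hyperbola branch with foci F1, F2 through u1, and E2, H2 those through u2. Take a ray from F1 intersecting E1 at e1 and H1 at h1. Let the ray F2e1 intersect E2 at e2 and the ray F2h1 intersect H2 at h2. Then e2, h2, and F1 are collinear. -/
open EuclideanGeometry

/-- If `A^2 L^2 = X^2 + Y^2` with `A,L > 0`, `Y ≠ 0`, then `A*L ± X > 0`. -/
lemma pos_aux (A L X Y : ℝ) (hA : 0 < A) (hL : 0 < L) (hY : Y ≠ 0)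
    (hc : A^2*L^2 = X^2+Y^2) : 0 < A*L + X ∧ 0 < A*L - X := by
  have hY2 : 0 < Y^2 := by positivity
  have hAL : 0 < A*L := mul_pos hA hL
  constructor <;> nlinarith [hY2, hAL, sq_nonneg (A*L - X), sq_nonneg (A*L + X)]

lemma pos_cancel (c d : ℝ) (h : 0 < c * d) (hd : 0 < d) : 0 < c := by
  nlinarith

lemma core (L : ℝ) (hL : 0 < L)
    (Ae1 Be1 Ah1 Bh1 Ae2 Be2 Ah2 Bh2 Au1 Bu1 Au2 Bu2 : ℝ)
    (Xe1 Ye1 Xh1 Yh1 Xe2 Ye2 Xh2 Yh2 Xu1 Xu2 : ℝ)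
    (hAe1 : 0 < Ae1) (hBe1 : 0 < Be1) (hAh1 : 0 < Ah1) (hBh1 : 0 < Bh1)
    (hAe2 : 0 < Ae2) (hBe2 : 0 < Be2) (hAh2 : 0 < Ah2) (hBh2 : 0 < Bh2)
    (hYe1 : Ye1 ≠ 0) (hYh1 : Yh1 ≠ 0) (hYe2 : Ye2 ≠ 0) (hYh2 : Yh2 ≠ 0)
    (ce1 : Ae1^2*L^2 = Xe1^2+Ye1^2) (ce1' : Be1^2*L^2 = (Xe1-L^2)^2+Ye1^2)
    (ch1 : Ah1^2*L^2 = Xh1^2+Yh1^2) (ch1' : Bh1^2*L^2 = (Xh1-L^2)^2+Yh1^2)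
    (ce2 : Ae2^2*L^2 = Xe2^2+Ye2^2) (ce2' : Be2^2*L^2 = (Xe2-L^2)^2+Ye2^2)
    (ch2 : Ah2^2*L^2 = Xh2^2+Yh2^2) (ch2' : Bh2^2*L^2 = (Xh2-L^2)^2+Yh2^2)
    (hu1 : Au1^2 - Bu1^2 = 2*Xu1 - L^2) (hu2 : Au2^2 - Bu2^2 = 2*Xu2 - L^2)
    (ru : ∃ t : ℝ, 0 < t ∧ Bu2 = t*Bu1 ∧ Xu2 - L^2 = t*(Xu1 - L^2))
    (he1 : Ae1 + Be1 = Au1 + Bu1) (hh1 : Ah1 - Bh1 = Au1 - Bu1)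
    (he2 : Ae2 + Be2 = Au2 + Bu2) (hh2 : Ah2 - Bh2 = Au2 - Bu2)
    (r1 : ∃ t : ℝ, 0 < t ∧ Xh1 = t*Xe1 ∧ Yh1 = t*Ye1 ∧ Ah1 = t*Ae1)
    (r2 : ∃ t : ℝ, 0 < t ∧ Xe2 - L^2 = t*(Xe1-L^2) ∧ Ye2 = t*Ye1 ∧ Be2 = t*Be1)
    (r3 : ∃ t : ℝ, 0 < t ∧ Xh2 - L^2 = t*(Xh1-L^2) ∧ Yh2 = t*Yh1 ∧ Bh2 = t*Bh1) :
    Xe2*Yh2 - Xh2*Ye2 = 0 := by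
  have hL2 : (0:ℝ) < L^2 := by positivity
  -- X in terms of distances, per point
  have hXe1 : Ae1^2 - Be1^2 = 2*Xe1 - L^2 := by
    have h : (Ae1^2 - Be1^2)*L^2 = (2*Xe1 - L^2)*L^2 := by linear_combination ce1 - ce1'
    exact mul_right_cancel₀ hL2.ne' h
  have hXh1 : Ah1^2 - Bh1^2 = 2*Xh1 - L^2 := by
    have h : (Ah1^2 - Bh1^2)*L^2 = (2*Xh1 - L^2)*L^2 := by linear_combination ch1 - ch1'
    exact mul_right_cancel₀ hL2.ne' h
  have hXe2 : Ae2^2 - Be2^2 = 2*Xe2 - L^2 := by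
    have h : (Ae2^2 - Be2^2)*L^2 = (2*Xe2 - L^2)*L^2 := by linear_combination ce2 - ce2'
    exact mul_right_cancel₀ hL2.ne' h
  have hXh2 : Ah2^2 - Bh2^2 = 2*Xh2 - L^2 := by
    have h : (Ah2^2 - Bh2^2)*L^2 = (2*Xh2 - L^2)*L^2 := by linear_combination ch2 - ch2'
    exact mul_right_cancel₀ hL2.ne' h
  -- positivity of alpha = A*L+X, A*L-X, beta = B*L+L^2-X, B*L-L^2+X per point
  obtain ⟨hae1, hae1'⟩ := pos_aux Ae1 L Xe1 Ye1 hAe1 hL hYe1 ce1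
  obtain ⟨hbe1', hbe1⟩ := pos_aux Be1 L (Xe1 - L^2) Ye1 hBe1 hL hYe1 ce1'
  obtain ⟨hah1, hah1'⟩ := pos_aux Ah1 L Xh1 Yh1 hAh1 hL hYh1 ch1
  obtain ⟨hbh1', hbh1⟩ := pos_aux Bh1 L (Xh1 - L^2) Yh1 hBh1 hL hYh1 ch1'
  obtain ⟨hae2, hae2'⟩ := pos_aux Ae2 L Xe2 Ye2 hAe2 hL hYe2 ce2
  obtain ⟨hbe2', hbe2⟩ := pos_aux Be2 L (Xe2 - L^2) Ye2 hBe2 hL hYe2 ce2'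
  obtain ⟨hah2, hah2'⟩ := pos_aux Ah2 L Xh2 Yh2 hAh2 hL hYh2 ch2
  obtain ⟨hbh2', hbh2⟩ := pos_aux Bh2 L (Xh2 - L^2) Yh2 hBh2 hL hYh2 ch2'
  -- note: hbe1 : 0 < Be1*L - (Xe1-L^2)  (i.e.  Be1*L + L^2 - Xe1), hbe1' : 0 < Be1*L + (Xe1-L^2)
  -- strictness: sums vs L
  have hS1 : 0 < Au1 + Bu1 - L := by
    have h : 0 < (Ae1+Be1-L) * L := by linarith [hae1', hbe1']
    have := pos_cancel _ _ h hL; linarith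
  have hS2 : 0 < Au2 + Bu2 - L := by
    have h : 0 < (Ae2+Be2-L) * L := by linarith [hae2', hbe2']
    have := pos_cancel _ _ h hL; linarith
  have hS1' : 0 < Au1 + Bu1 + L := by linarith
  have hS2' : 0 < Au2 + Bu2 + L := by linarith
  -- differences vs L (via the hyperbola points)
  have hD1 : 0 < L - (Au1 - Bu1) := by
    have key : (L - (Ah1 - Bh1))*(Ah1 + Bh1) = (Ah1*L - Xh1) + (Bh1*L - (Xh1 - L^2)) := by
      linear_combination -hXh1
    have h : 0 < (L - (Ah1-Bh1))*(Ah1+Bh1) := by rw [key]; linarith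
    have := pos_cancel _ _ h (by linarith); linarith
  have hD1' : 0 < L + (Au1 - Bu1) := by
    have key : (L + (Ah1 - Bh1))*(Ah1 + Bh1) = (Ah1*L + Xh1) + (Bh1*L + (Xh1 - L^2)) := by
      linear_combination hXh1
    have h : 0 < (L + (Ah1-Bh1))*(Ah1+Bh1) := by rw [key]; linarith
    have := pos_cancel _ _ h (by linarith); linarith
  have hD2 : 0 < L - (Au2 - Bu2) := by
    have key : (L - (Ah2 - Bh2))*(Ah2 + Bh2) = (Ah2*L - Xh2) + (Bh2*L - (Xh2 - L^2)) := by
      linear_combination -hXh2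
    have h : 0 < (L - (Ah2-Bh2))*(Ah2+Bh2) := by rw [key]; linarith
    have := pos_cancel _ _ h (by linarith); linarith
  have hD2' : 0 < L + (Au2 - Bu2) := by
    have key : (L + (Ah2 - Bh2))*(Ah2 + Bh2) = (Ah2*L + Xh2) + (Bh2*L + (Xh2 - L^2)) := by
      linear_combination hXh2
    have h : 0 < (L + (Ah2-Bh2))*(Ah2+Bh2) := by rw [key]; linarith
    have := pos_cancel _ _ h (by linarith); linarith
  -- ray scalar data
  obtain ⟨t1, ht1, r1x, r1y, r1a⟩ := r1
  obtain ⟨t2, ht2, r2x, r2y, r2b⟩ := r2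
  obtain ⟨t3, ht3, r3x, r3y, r3b⟩ := r3
  obtain ⟨tu, htu, rub, rux⟩ := ru
  -- equal tangent half-angle relations along rays
  have a1 : Yh1*(Ae1*L+Xe1) = Ye1*(Ah1*L+Xh1) := by
    rw [r1x, r1y, r1a]; ring
  have b1 : Ye2*(Be1*L - (Xe1-L^2)) = Ye1*(Be2*L - (Xe2-L^2)) := by
    linear_combination (Be1*L - Xe1 + L^2)*r2y - Ye1*L*r2b + Ye1*r2x
  have c1 : Yh2*(Bh1*L - (Xh1-L^2)) = Yh1*(Bh2*L - (Xh2-L^2)) := by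
    linear_combination (Bh1*L - Xh1 + L^2)*r3y - Yh1*L*r3b + Yh1*r3x
  -- conic relations
  have d1 : Ye1^2*(Au1+Bu1+L) = (Au1+Bu1-L)*((Ae1*L+Xe1)*(Be1*L - (Xe1-L^2))) := by
    rw [← he1]
    linear_combination (Ae1*L+Xe1)*L*hXe1 - (Ae1+Be1+L)*ce1
  have g1 : Ye2^2*(Au2+Bu2+L) = (Au2+Bu2-L)*((Ae2*L+Xe2)*(Be2*L - (Xe2-L^2))) := by
    rw [← he2]
    linear_combination (Ae2*L+Xe2)*L*hXe2 - (Ae2+Be2+L)*ce2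
  have e1' : (Bh1*L - (Xh1-L^2))*(L+(Au1-Bu1)) = (Ah1*L+Xh1)*(L-(Au1-Bu1)) := by
    rw [← hh1]
    linear_combination L*hXh1
  have h1' : (Bh2*L - (Xh2-L^2))*(L+(Au2-Bu2)) = (Ah2*L+Xh2)*(L-(Au2-Bu2)) := by
    rw [← hh2]
    linear_combination L*hXh2
  -- the link between the two pairs of conics (common ray through u1, u2)
  have f1 : (Au1+Bu1-L)*(L+(Au1-Bu1))*((Au2+Bu2+L)*(L-(Au2-Bu2)))
      = (Au2+Bu2-L)*(L+(Au2-Bu2))*((Au1+Bu1+L)*(L-(Au1-Bu1))) := by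
    linear_combination (4*L*Bu2)*hu1 - (4*L*Bu1)*hu2 + (8*L*(Xu1-L^2))*rub - (8*L*Bu1)*rux
  -- Step 1 : relation between Yh2 and Ye1
  have s1a : Yh2*((Ah1*L+Xh1)*((L-(Au1-Bu1))*(L+(Au2-Bu2))))
      = Yh1*((Ah2*L+Xh2)*((L-(Au2-Bu2))*(L+(Au1-Bu1)))) := by
    linear_combination ((L+(Au1-Bu1))*(L+(Au2-Bu2)))*c1 - Yh2*(L+(Au2-Bu2))*e1'
      + Yh1*(L+(Au1-Bu1))*h1'
  have s1m : (Yh2*((Ae1*L+Xe1)*((L-(Au1-Bu1))*(L+(Au2-Bu2)))))*(Ah1*L+Xh1)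
      = (Ye1*((Ah2*L+Xh2)*((L+(Au1-Bu1))*(L-(Au2-Bu2)))))*(Ah1*L+Xh1) := by
    linear_combination (Ae1*L+Xe1)*s1a + ((Ah2*L+Xh2)*(L-(Au2-Bu2))*(L+(Au1-Bu1)))*a1
  have step1 : Yh2*((Ae1*L+Xe1)*((L-(Au1-Bu1))*(L+(Au2-Bu2))))
      = Ye1*((Ah2*L+Xh2)*((L+(Au1-Bu1))*(L-(Au2-Bu2)))) :=
    mul_right_cancel₀ hah1.ne' s1m
  -- Step 2 : relation between Ye2 and Ye1
  have s2m : (Ye2*Ye1*(Au2+Bu2+L))*Ye2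
      = ((Au2+Bu2-L)*((Ae2*L+Xe2)*(Be1*L - (Xe1-L^2))))*Ye2 := by
    linear_combination Ye1*g1 - ((Au2+Bu2-L)*(Ae2*L+Xe2))*b1
  have s2a : Ye2*Ye1*(Au2+Bu2+L) = (Au2+Bu2-L)*((Ae2*L+Xe2)*(Be1*L - (Xe1-L^2))) :=
    mul_right_cancel₀ hYe2 s2m
  have s2bm : (Ye2*((Au2+Bu2+L)*((Au1+Bu1-L)*(Ae1*L+Xe1))))*Ye1
      = ((Au2+Bu2-L)*((Au1+Bu1+L)*((Ae2*L+Xe2)*Ye1)))*Ye1 := by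
    linear_combination ((Au1+Bu1-L)*(Ae1*L+Xe1))*s2a - ((Au2+Bu2-L)*(Ae2*L+Xe2))*d1
  have step2 : Ye2*((Au2+Bu2+L)*((Au1+Bu1-L)*(Ae1*L+Xe1)))
      = (Au2+Bu2-L)*((Au1+Bu1+L)*((Ae2*L+Xe2)*Ye1)) :=
    mul_right_cancel₀ hYe1 s2bm
  -- combine: the dagger relation
  have hKpos : 0 < (Au2+Bu2+L)*((Au1+Bu1-L)*((L-(Au1-Bu1))*((L+(Au2-Bu2))*(Ae1*L+Xe1)))) := by
    positivity
  have daggerm : (Ye2*(Ah2*L+Xh2))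
        *((Au2+Bu2+L)*((Au1+Bu1-L)*((L-(Au1-Bu1))*((L+(Au2-Bu2))*(Ae1*L+Xe1)))))
      = (Yh2*(Ae2*L+Xe2))
        *((Au2+Bu2+L)*((Au1+Bu1-L)*((L-(Au1-Bu1))*((L+(Au2-Bu2))*(Ae1*L+Xe1))))) := by
    linear_combination ((L-(Au1-Bu1))*(L+(Au2-Bu2))*(Ah2*L+Xh2))*step2
      - ((Au2+Bu2+L)*(Au1+Bu1-L)*(Ae2*L+Xe2))*step1
      - Ye1*(Ae2*L+Xe2)*(Ah2*L+Xh2)*f1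
  have dagger : Ye2*(Ah2*L+Xh2) = Yh2*(Ae2*L+Xe2) :=
    mul_right_cancel₀ hKpos.ne' daggerm
  -- from dagger, deduce the cross-product vanishes
  have hsq : (Ye2*(Ah2*L+Xh2))^2 = (Yh2*(Ae2*L+Xe2))^2 := by rw [dagger]
  have hYe2sq : Ye2^2 = (Ae2*L-Xe2)*(Ae2*L+Xe2) := by linear_combination -ce2
  have hYh2sq : Yh2^2 = (Ah2*L-Xh2)*(Ah2*L+Xh2) := by linear_combination -ch2
  have m3 : ((Ae2*L-Xe2)*(Ah2*L+Xh2))*((Ae2*L+Xe2)*(Ah2*L+Xh2))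
      = ((Ah2*L-Xh2)*(Ae2*L+Xe2))*((Ae2*L+Xe2)*(Ah2*L+Xh2)) := by
    linear_combination hsq - (Ah2*L+Xh2)^2*hYe2sq + (Ae2*L+Xe2)^2*hYh2sq
  have hcross1 : (Ae2*L-Xe2)*(Ah2*L+Xh2) = (Ah2*L-Xh2)*(Ae2*L+Xe2) :=
    mul_right_cancel₀ (by positivity : (0:ℝ) < (Ae2*L+Xe2)*(Ah2*L+Xh2)).ne' m3
  have hX' : Xe2*(Ah2*L+Xh2) = Xh2*(Ae2*L+Xe2) := by linear_combination (-1/2)*hcross1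
  have mAX : (Ae2*Xh2)*L = (Ah2*Xe2)*L := by linear_combination -hX'
  have hAX : Ae2*Xh2 = Ah2*Xe2 := mul_right_cancel₀ hL.ne' mAX
  have mYA : (Ye2*Ah2)*(Ae2*L+Xe2) = (Yh2*Ae2)*(Ae2*L+Xe2) := by
    linear_combination Ae2*dagger - Ye2*hAX
  have hYA : Ye2*Ah2 = Yh2*Ae2 := mul_right_cancel₀ hae2.ne' mYA
  linear_combination L*hYA - dagger

lemma dist_sq_eq (P Q : EuclideanSpace ℝ (Fin 2)) :
    dist P Q ^ 2 = (P 0 - Q 0)^2 + (P 1 - Q 1)^2 := by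
  rw [EuclideanSpace.dist_eq, Real.sq_sqrt (Finset.sum_nonneg fun i _ => sq_nonneg _)]
  simp [Fin.sum_univ_two, Real.dist_eq, sq_abs]

lemma off_axis (F1 F2 P : EuclideanSpace ℝ (Fin 2)) (hF : F1 ≠ F2)
    (h : P ∉ affineSpan ℝ ({F1, F2} : Set (EuclideanSpace ℝ (Fin 2)))) :
    (F2 0 - F1 0)*(P 1 - F1 1) - (F2 1 - F1 1)*(P 0 - F1 0) ≠ 0 := by
  intro h0
  have hs : 0 < (F2 0 - F1 0)^2 + (F2 1 - F1 1)^2 := by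
    by_contra hc
    push_neg at hc
    have h1 : F2 0 - F1 0 = 0 := by nlinarith [sq_nonneg (F2 0 - F1 0), sq_nonneg (F2 1 - F1 1)]
    have h2 : F2 1 - F1 1 = 0 := by nlinarith [sq_nonneg (F2 0 - F1 0), sq_nonneg (F2 1 - F1 1)]
    apply hF
    ext i
    fin_cases i
    · show F1 0 = F2 0; linarith
    · show F1 1 = F2 1; linarith
  apply h
  have key : (((F2 0 - F1 0)*(P 0 - F1 0) + (F2 1 - F1 1)*(P 1 - F1 1)) /
      ((F2 0 - F1 0)^2 + (F2 1 - F1 1)^2)) • (F2 -ᵥ F1) +ᵥ F1 = P := by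
    ext i
    fin_cases i
    · show ((F2 0 - F1 0)*(P 0 - F1 0) + (F2 1 - F1 1)*(P 1 - F1 1)) /
          ((F2 0 - F1 0)^2 + (F2 1 - F1 1)^2) * (F2 0 - F1 0) + F1 0 = P 0
      field_simp
      linear_combination (F2 1 - F1 1) * h0
    · show ((F2 0 - F1 0)*(P 0 - F1 0) + (F2 1 - F1 1)*(P 1 - F1 1)) /
          ((F2 0 - F1 0)^2 + (F2 1 - F1 1)^2) * (F2 1 - F1 1) + F1 1 = P 1
      field_simp
      linear_combination -(F2 0 - F1 0) * h0
  rw [← key]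
  exact smul_vsub_vadd_mem_affineSpan_pair _ F1 F2

lemma collinear_of_cross (p q r : EuclideanSpace ℝ (Fin 2)) (hpr : p ≠ r)
    (h : (p 0 - r 0)*(q 1 - r 1) - (p 1 - r 1)*(q 0 - r 0) = 0) :
    Collinear ℝ ({p, q, r} : Set (EuclideanSpace ℝ (Fin 2))) := by
  refine (collinear_iff_of_mem (by simp : r ∈ ({p, q, r} : Set _))).2 ⟨p - r, ?_⟩
  intro x hx
  simp only [Set.mem_insert_iff, Set.mem_singleton_iff] at hx
  have hne : p 0 - r 0 ≠ 0 ∨ p 1 - r 1 ≠ 0 := by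
    by_contra hc
    push_neg at hc
    apply hpr
    ext i
    fin_cases i
    · show p 0 = r 0; linarith [hc.1]
    · show p 1 = r 1; linarith [hc.2]
  rcases hx with rfl | rfl | rfl
  · exact ⟨1, by rw [one_smul, vadd_eq_add, sub_add_cancel]⟩
  · rcases hne with h0 | h1
    · refine ⟨(x 0 - r 0)/(p 0 - r 0), ?_⟩
      ext i
      fin_cases i
      · show x 0 = (x 0 - r 0)/(p 0 - r 0) * (p 0 - r 0) + r 0
        field_simp
        ring
      · show x 1 = (x 0 - r 0)/(p 0 - r 0) * (p 1 - r 1) + r 1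
        field_simp
        linear_combination h
    · refine ⟨(x 1 - r 1)/(p 1 - r 1), ?_⟩
      ext i
      fin_cases i
      · show x 0 = (x 1 - r 1)/(p 1 - r 1) * (p 0 - r 0) + r 0
        field_simp
        linear_combination -h
      · show x 1 = (x 1 - r 1)/(p 1 - r 1) * (p 1 - r 1) + r 1
        field_simp
        ring
  · exact ⟨0, by rw [zero_smul, vadd_eq_add, zero_add]⟩

lemma ray_scalar (F : EuclideanSpace ℝ (Fin 2)) {P Q : EuclideanSpace ℝ (Fin 2)}
    (hray : SameRay ℝ (P - F) (Q - F)) (hP : P ≠ F) (hQ : Q ≠ F) :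
    ∃ t : ℝ, 0 < t ∧ Q 0 - F 0 = t*(P 0 - F 0) ∧ Q 1 - F 1 = t*(P 1 - F 1) ∧
      dist Q F = t * dist P F := by
  obtain ⟨r1, r2, hr1, hr2, hr⟩ := hray.exists_pos (sub_ne_zero.mpr hP) (sub_ne_zero.mpr hQ)
  have hveq : (r1/r2) • (P - F) = Q - F := by
    rw [div_eq_inv_mul, mul_smul, hr, inv_smul_smul₀ hr2.ne']
  refine ⟨r1/r2, div_pos hr1 hr2, ?_, ?_, ?_⟩
  · have h := congrArg (fun z : EuclideanSpace ℝ (Fin 2) => z 0) hveq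
    simp only [PiLp.smul_apply, PiLp.sub_apply, smul_eq_mul] at h
    linarith [h]
  · have h := congrArg (fun z : EuclideanSpace ℝ (Fin 2) => z 1) hveq
    simp only [PiLp.smul_apply, PiLp.sub_apply, smul_eq_mul] at h
    linarith [h]
  · rw [dist_eq_norm, dist_eq_norm, ← hveq, norm_smul, Real.norm_eq_abs,
      abs_of_pos (div_pos hr1 hr2)]


theorem stmt3
    (F1 F2 u1 u2 e1 h1 e2 h2 : EuclideanSpace ℝ (Fin 2))
    (hF : F1 ≠ F2)
    (hne : u1 ≠ F1 ∧ u1 ≠ F2 ∧ u2 ≠ F1 ∧ u2 ≠ F2 ∧ e1 ≠ F1 ∧ e1 ≠ F2 ∧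
           h1 ≠ F1 ∧ h1 ≠ F2 ∧ e2 ≠ F1 ∧ e2 ≠ F2 ∧ h2 ≠ F1 ∧ h2 ≠ F2)
    -- u1, u2 on a common ray from F2
    (hrayu : SameRay ℝ (u1 - F2) (u2 - F2))
    -- e1 and h1 on a common ray from F1
    (hrayF1 : SameRay ℝ (e1 - F1) (h1 - F1))
    -- e1 on the ellipse through u1, h1 on the hyperbola branch through u1
    (he1 : dist e1 F1 + dist e1 F2 = dist u1 F1 + dist u1 F2)
    (hh1 : dist h1 F1 - dist h1 F2 = dist u1 F1 - dist u1 F2)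
    -- e2 on ray F2 e1 and on the ellipse through u2
    (hraye2 : SameRay ℝ (e2 - F2) (e1 - F2))
    (he2 : dist e2 F1 + dist e2 F2 = dist u2 F1 + dist u2 F2)
    -- h2 on ray F2 h1 and on the hyperbola branch through u2
    (hrayh2 : SameRay ℝ (h2 - F2) (h1 - F2))
    (hh2 : dist h2 F1 - dist h2 F2 = dist u2 F1 - dist u2 F2)
    -- nondegeneracy: points strictly on one side of line F1F2
    (hside : (affineSpan ℝ {F1, F2}).SSameSide e1 h1 ∧
             (affineSpan ℝ {F1, F2}).SSameSide e1 e2 ∧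
             (affineSpan ℝ {F1, F2}).SSameSide e1 h2) :
    Collinear ℝ ({e2, h2, F1} : Set (EuclideanSpace ℝ (Fin 2))) := by
  obtain ⟨hu1F1, hu1F2, hu2F1, hu2F2, he1F1, he1F2, hh1F1, hh1F2, he2F1, he2F2, hh2F1, hh2F2⟩ := hne
  have hs : 0 < ((F2 0 - F1 0)^2 + (F2 1 - F1 1)^2) := by
    by_contra hc
    push_neg at hc
    have h1' : F2 0 - F1 0 = 0 := by nlinarith [sq_nonneg (F2 0 - F1 0), sq_nonneg (F2 1 - F1 1)]
    have h2' : F2 1 - F1 1 = 0 := by nlinarith [sq_nonneg (F2 0 - F1 0), sq_nonneg (F2 1 - F1 1)]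
    apply hF
    ext i
    fin_cases i
    · show F1 0 = F2 0; linarith
    · show F1 1 = F2 1; linarith
  set L := Real.sqrt ((F2 0 - F1 0)^2 + (F2 1 - F1 1)^2) with hLdef
  have hL : 0 < L := Real.sqrt_pos.mpr hs
  have hL2 : L^2 = ((F2 0 - F1 0)^2 + (F2 1 - F1 1)^2) := Real.sq_sqrt hs.le
  -- circle equations
  have ce1 : (dist e1 F1)^2 * L^2 = ((F2 0 - F1 0)*(e1 0 - F1 0) + (F2 1 - F1 1)*(e1 1 - F1 1))^2 + ((F2 0 - F1 0)*(e1 1 - F1 1) - (F2 1 - F1 1)*(e1 0 - F1 0))^2 := by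
    rw [hL2]; linear_combination ((F2 0 - F1 0)^2 + (F2 1 - F1 1)^2) * dist_sq_eq e1 F1
  have ce1' : (dist e1 F2)^2 * L^2 = (((F2 0 - F1 0)*(e1 0 - F1 0) + (F2 1 - F1 1)*(e1 1 - F1 1)) - L^2)^2 + ((F2 0 - F1 0)*(e1 1 - F1 1) - (F2 1 - F1 1)*(e1 0 - F1 0))^2 := by
    rw [hL2]; linear_combination ((F2 0 - F1 0)^2 + (F2 1 - F1 1)^2) * dist_sq_eq e1 F2
  have ch1 : (dist h1 F1)^2 * L^2 = ((F2 0 - F1 0)*(h1 0 - F1 0) + (F2 1 - F1 1)*(h1 1 - F1 1))^2 + ((F2 0 - F1 0)*(h1 1 - F1 1) - (F2 1 - F1 1)*(h1 0 - F1 0))^2 := by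
    rw [hL2]; linear_combination ((F2 0 - F1 0)^2 + (F2 1 - F1 1)^2) * dist_sq_eq h1 F1
  have ch1' : (dist h1 F2)^2 * L^2 = (((F2 0 - F1 0)*(h1 0 - F1 0) + (F2 1 - F1 1)*(h1 1 - F1 1)) - L^2)^2 + ((F2 0 - F1 0)*(h1 1 - F1 1) - (F2 1 - F1 1)*(h1 0 - F1 0))^2 := by
    rw [hL2]; linear_combination ((F2 0 - F1 0)^2 + (F2 1 - F1 1)^2) * dist_sq_eq h1 F2
  have ce2 : (dist e2 F1)^2 * L^2 = ((F2 0 - F1 0)*(e2 0 - F1 0) + (F2 1 - F1 1)*(e2 1 - F1 1))^2 + ((F2 0 - F1 0)*(e2 1 - F1 1) - (F2 1 - F1 1)*(e2 0 - F1 0))^2 := by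
    rw [hL2]; linear_combination ((F2 0 - F1 0)^2 + (F2 1 - F1 1)^2) * dist_sq_eq e2 F1
  have ce2' : (dist e2 F2)^2 * L^2 = (((F2 0 - F1 0)*(e2 0 - F1 0) + (F2 1 - F1 1)*(e2 1 - F1 1)) - L^2)^2 + ((F2 0 - F1 0)*(e2 1 - F1 1) - (F2 1 - F1 1)*(e2 0 - F1 0))^2 := by
    rw [hL2]; linear_combination ((F2 0 - F1 0)^2 + (F2 1 - F1 1)^2) * dist_sq_eq e2 F2
  have ch2 : (dist h2 F1)^2 * L^2 = ((F2 0 - F1 0)*(h2 0 - F1 0) + (F2 1 - F1 1)*(h2 1 - F1 1))^2 + ((F2 0 - F1 0)*(h2 1 - F1 1) - (F2 1 - F1 1)*(h2 0 - F1 0))^2 := by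
    rw [hL2]; linear_combination ((F2 0 - F1 0)^2 + (F2 1 - F1 1)^2) * dist_sq_eq h2 F1
  have ch2' : (dist h2 F2)^2 * L^2 = (((F2 0 - F1 0)*(h2 0 - F1 0) + (F2 1 - F1 1)*(h2 1 - F1 1)) - L^2)^2 + ((F2 0 - F1 0)*(h2 1 - F1 1) - (F2 1 - F1 1)*(h2 0 - F1 0))^2 := by
    rw [hL2]; linear_combination ((F2 0 - F1 0)^2 + (F2 1 - F1 1)^2) * dist_sq_eq h2 F2
  have hu1' : (dist u1 F1)^2 - (dist u1 F2)^2 = 2*((F2 0 - F1 0)*(u1 0 - F1 0) + (F2 1 - F1 1)*(u1 1 - F1 1)) - L^2 := by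
    rw [hL2]; linear_combination dist_sq_eq u1 F1 - dist_sq_eq u1 F2
  have hu2' : (dist u2 F1)^2 - (dist u2 F2)^2 = 2*((F2 0 - F1 0)*(u2 0 - F1 0) + (F2 1 - F1 1)*(u2 1 - F1 1)) - L^2 := by
    rw [hL2]; linear_combination dist_sq_eq u2 F1 - dist_sq_eq u2 F2
  -- ray conditions as scalar data
  obtain ⟨tu, htu, hu0, hu1c, hud⟩ := ray_scalar F2 hrayu hu1F2 hu2F2
  obtain ⟨t1, ht1, h10, h11, h1d⟩ := ray_scalar F1 hrayF1 he1F1 hh1F1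
  obtain ⟨t2, ht2, h20, h21, h2d⟩ := ray_scalar F2 hraye2.symm he1F2 he2F2
  obtain ⟨t3, ht3, h30, h31, h3d⟩ := ray_scalar F2 hrayh2.symm hh1F2 hh2F2
  have ru' : ∃ t : ℝ, 0 < t ∧ dist u2 F2 = t * dist u1 F2 ∧
      ((F2 0 - F1 0)*(u2 0 - F1 0) + (F2 1 - F1 1)*(u2 1 - F1 1)) - L^2 = t*(((F2 0 - F1 0)*(u1 0 - F1 0) + (F2 1 - F1 1)*(u1 1 - F1 1)) - L^2) :=
    ⟨tu, htu, hud, by linear_combination (F2 0 - F1 0)*hu0 + (F2 1 - F1 1)*hu1c + (tu - 1)*hL2⟩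
  have r1' : ∃ t : ℝ, 0 < t ∧ ((F2 0 - F1 0)*(h1 0 - F1 0) + (F2 1 - F1 1)*(h1 1 - F1 1)) = t*((F2 0 - F1 0)*(e1 0 - F1 0) + (F2 1 - F1 1)*(e1 1 - F1 1)) ∧ ((F2 0 - F1 0)*(h1 1 - F1 1) - (F2 1 - F1 1)*(h1 0 - F1 0)) = t*((F2 0 - F1 0)*(e1 1 - F1 1) - (F2 1 - F1 1)*(e1 0 - F1 0)) ∧
      dist h1 F1 = t * dist e1 F1 :=
    ⟨t1, ht1, by linear_combination (F2 0 - F1 0)*h10 + (F2 1 - F1 1)*h11,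
      by linear_combination (F2 0 - F1 0)*h11 - (F2 1 - F1 1)*h10, h1d⟩
  have r2' : ∃ t : ℝ, 0 < t ∧ ((F2 0 - F1 0)*(e2 0 - F1 0) + (F2 1 - F1 1)*(e2 1 - F1 1)) - L^2 = t*(((F2 0 - F1 0)*(e1 0 - F1 0) + (F2 1 - F1 1)*(e1 1 - F1 1)) - L^2) ∧
      ((F2 0 - F1 0)*(e2 1 - F1 1) - (F2 1 - F1 1)*(e2 0 - F1 0)) = t*((F2 0 - F1 0)*(e1 1 - F1 1) - (F2 1 - F1 1)*(e1 0 - F1 0)) ∧ dist e2 F2 = t * dist e1 F2 :=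
    ⟨t2, ht2, by linear_combination (F2 0 - F1 0)*h20 + (F2 1 - F1 1)*h21 + (t2 - 1)*hL2,
      by linear_combination (F2 0 - F1 0)*h21 - (F2 1 - F1 1)*h20, h2d⟩
  have r3' : ∃ t : ℝ, 0 < t ∧ ((F2 0 - F1 0)*(h2 0 - F1 0) + (F2 1 - F1 1)*(h2 1 - F1 1)) - L^2 = t*(((F2 0 - F1 0)*(h1 0 - F1 0) + (F2 1 - F1 1)*(h1 1 - F1 1)) - L^2) ∧
      ((F2 0 - F1 0)*(h2 1 - F1 1) - (F2 1 - F1 1)*(h2 0 - F1 0)) = t*((F2 0 - F1 0)*(h1 1 - F1 1) - (F2 1 - F1 1)*(h1 0 - F1 0)) ∧ dist h2 F2 = t * dist h1 F2 :=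
    ⟨t3, ht3, by linear_combination (F2 0 - F1 0)*h30 + (F2 1 - F1 1)*h31 + (t3 - 1)*hL2,
      by linear_combination (F2 0 - F1 0)*h31 - (F2 1 - F1 1)*h30, h3d⟩
  have hcross := core L hL (dist e1 F1) (dist e1 F2) (dist h1 F1) (dist h1 F2)
    (dist e2 F1) (dist e2 F2) (dist h2 F1) (dist h2 F2)
    (dist u1 F1) (dist u1 F2) (dist u2 F1) (dist u2 F2)
    ((F2 0 - F1 0)*(e1 0 - F1 0) + (F2 1 - F1 1)*(e1 1 - F1 1)) ((F2 0 - F1 0)*(e1 1 - F1 1) - (F2 1 - F1 1)*(e1 0 - F1 0)) ((F2 0 - F1 0)*(h1 0 - F1 0) + (F2 1 - F1 1)*(h1 1 - F1 1)) ((F2 0 - F1 0)*(h1 1 - F1 1) - (F2 1 - F1 1)*(h1 0 - F1 0)) ((F2 0 - F1 0)*(e2 0 - F1 0) + (F2 1 - F1 1)*(e2 1 - F1 1)) ((F2 0 - F1 0)*(e2 1 - F1 1) - (F2 1 - F1 1)*(e2 0 - F1 0)) ((F2 0 - F1 0)*(h2 0 - F1 0) + (F2 1 - F1 1)*(h2 1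 - F1 1)) ((F2 0 - F1 0)*(h2 1 - F1 1) - (F2 1 - F1 1)*(h2 0 - F1 0))
    ((F2 0 - F1 0)*(u1 0 - F1 0) + (F2 1 - F1 1)*(u1 1 - F1 1)) ((F2 0 - F1 0)*(u2 0 - F1 0) + (F2 1 - F1 1)*(u2 1 - F1 1))
    (dist_pos.mpr he1F1) (dist_pos.mpr he1F2) (dist_pos.mpr hh1F1) (dist_pos.mpr hh1F2)
    (dist_pos.mpr he2F1) (dist_pos.mpr he2F2) (dist_pos.mpr hh2F1) (dist_pos.mpr hh2F2)
    (off_axis F1 F2 e1 hF hside.1.2.1) (off_axis F1 F2 h1 hF hside.1.2.2)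
    (off_axis F1 F2 e2 hF hside.2.1.2.2) (off_axis F1 F2 h2 hF hside.2.2.2.2)
    ce1 ce1' ch1 ch1' ce2 ce2' ch2 ch2' hu1' hu2' ru' he1 hh1 he2 hh2 r1' r2' r3'
  have hc2 : ((F2 0 - F1 0)^2 + (F2 1 - F1 1)^2) * ((e2 0 - F1 0)*(h2 1 - F1 1) - (e2 1 - F1 1)*(h2 0 - F1 0)) = 0 := by
    linear_combination hcross
  rcases mul_eq_zero.mp hc2 with h | h
  · exact absurd h hs.ne'
  · exact collinear_of_cross e2 h2 F1 he2F1 h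
end

section
/- Let α, β, γ ∈ (0, π) with α + γ < π and β + γ < π, and assume cos((α−β)/2) ≠ 0 and sin(γ + (α+β)/2) + sin((β−α)/2) ≠ 0. Define a1 = sin α / sin(α+γ), b1 = sin γ / sin(α+γ), a2 = sin β / sin(β+γ), b2 = sin γ / sin(β+γ), c = ½(−a1 + b1 + a2 + b2), and suppose c > 0. If φ ∈ (0, π) satisfies 1 + c² − 2c·cos φ = ¼(a1 − b1 + a2 + b2)², then cos φ = cos((α+β)/2) / cos((α−β)/2). -/
open Real

lemma key_half (x y z : ℝ) :
    (Real.sin (2*x + 2*z) * Real.sin (2*y + 2*z)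
      + (Real.sin (2*z) - Real.sin (2*x)) * (Real.sin (2*y) + Real.sin (2*z))) * Real.cos (x - y)
    = ((Real.sin (2*z) - Real.sin (2*x)) * Real.sin (2*y + 2*z)
      + (Real.sin (2*y) + Real.sin (2*z)) * Real.sin (2*x + 2*z)) * Real.cos (x + y) := by
  simp only [Real.sin_add, Real.cos_add, Real.cos_sub, Real.sin_two_mul, Real.cos_two_mul]
  linear_combination ((-16) * Real.cos x * Real.cos y * Real.sin z ^ 2 * Real.cos z ^ 2 + (16) * Real.cos x * Real.cos y ^ 3 * Real.sin z ^ 2 * Real.cos z ^ 2 + (-16) * Real.cos x * Real.sin y * Real.cos y ^ 2 * Real.sin z * Real.cos z + (16) * Real.cos x * Real.sin y * Real.cos y ^ 2 * Real.sin z * Real.cos z ^ 3 + (-16) * Real.sin x * Real.cos y * Real.sin z * Real.cos z ^ 3 + (16) * Real.sin x * Real.cos y ^ 3 * Real.sin z * Real.cos z ^ 3 + (-16) * Real.sin x * Real.sin y * Real.cos y ^ 2 * Real.cos z ^ 2 + (16) * Real.sin x * Real.sin y * Real.cos y ^ 2 * Real.cos z ^ 4 + (16) * Real.sin x * Real.sin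 y * Real.cos y ^ 2 * Real.sin z ^ 2 * Real.cos z ^ 2 + (16) * Real.sin x * Real.sin y ^ 2 * Real.cos y * Real.sin z * Real.cos z ^ 3) * (Real.sin_sq_add_cos_sq x) + ((16) * Real.sin x * Real.cos y * Real.sin z * Real.cos z ^ 3 + (-16) * Real.sin x * Real.sin y * Real.cos z ^ 2 + (16) * Real.sin x * Real.sin y * Real.cos z ^ 4 + (16) * Real.sin x * Real.sin y * Real.sin z ^ 2 * Real.cos z ^ 2 + (-16) * Real.sin x ^ 2 * Real.cos x * Real.cos y * Real.sin z ^ 2 * Real.cos z ^ 2 + (-16) * Real.sin x ^ 3 * Real.cos y * Real.sin z * Real.cos z ^ 3 + (16) * Real.sin x ^ 3 * Real.sin y * Real.cos z ^ 2 + (-16) * Real.sin x ^ 3 * Real.sin y * Real.cos z ^ 4 + (-16) * Real.sin x ^ 3 * Real.sin y * Real.sin z ^ 2 * Real.cos z ^ 2) * (Real.sin_sq_add_cos_sq y) + ((16) * Real.sin x * Real.sin y * Real.cos z ^ 2 + (-16) * Real.sin x * Real.sin y ^ 3 * Real.cos z ^ 2 + (16) * Real.sin x ^ 2 * Real.cos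 x * Real.sin y ^ 2 * Real.cos y * Real.cos z ^ 2 + (-16) * Real.sin x ^ 3 * Real.sin y * Real.cos z ^ 2 + (16) * Real.sin x ^ 3 * Real.sin y ^ 3 * Real.cos z ^ 2) * (Real.sin_sq_add_cos_sq z)

theorem stmt7 (α β γ φ a1 b1 a2 b2 c : ℝ)
    (hα : α ∈ Set.Ioo 0 π) (hβ : β ∈ Set.Ioo 0 π) (hγ : γ ∈ Set.Ioo 0 π)
    (hαγ : α + γ < π) (hβγ : β + γ < π)
    (hcosne : Real.cos ((α - β) / 2) ≠ 0)
    (hsinne : Real.sin (γ + (α + β) / 2) + Real.sin ((β - α) / 2) ≠ 0)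
    (ha1 : a1 = Real.sin α / Real.sin (α + γ))
    (hb1 : b1 = Real.sin γ / Real.sin (α + γ))
    (ha2 : a2 = Real.sin β / Real.sin (β + γ))
    (hb2 : b2 = Real.sin γ / Real.sin (β + γ))
    (hc : c = (1 / 2) * (-a1 + b1 + a2 + b2))
    (hcpos : 0 < c)
    (hφ : φ ∈ Set.Ioo 0 π)
    (heq : 1 + c ^ 2 - 2 * c * Real.cos φ = (1 / 4) * (a1 - b1 + a2 + b2) ^ 2) :
    Real.cos φ = Real.cos ((α + β) / 2) / Real.cos ((α - β) / 2) := by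
  have hs1 : 0 < Real.sin (α + γ) :=
    Real.sin_pos_of_pos_of_lt_pi (by linarith [hα.1, hγ.1]) hαγ
  have hs2 : 0 < Real.sin (β + γ) :=
    Real.sin_pos_of_pos_of_lt_pi (by linarith [hβ.1, hγ.1]) hβγ
  have hcne : c ≠ 0 := ne_of_gt hcpos
  -- key trig identity, specialized
  have K := key_half (α / 2) (β / 2) (γ / 2)
  have e1 : 2 * (α / 2) + 2 * (γ / 2) = α + γ := by ring
  have e2 : 2 * (β / 2) + 2 * (γ / 2) = β + γ := by ring
  have e3 : 2 * (α / 2) = α := by ring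
  have e4 : 2 * (β / 2) = β := by ring
  have e5 : 2 * (γ / 2) = γ := by ring
  have e6 : α / 2 - β / 2 = (α - β) / 2 := by ring
  have e7 : α / 2 + β / 2 = (α + β) / 2 := by ring
  rw [e1, e2, e3, e4, e5, e6, e7] at K
  -- main computation
  rw [eq_div_iff hcosne]
  have h2c : 2 * c * Real.cos φ = 1 + (b1 - a1) * (a2 + b2) := by
    have : (1 / 4) * (a1 - b1 + a2 + b2) ^ 2 = c ^ 2 - (b1 - a1) * (a2 + b2) := by
      rw [hc]; ring
    linarith [heq, this]
  have hmul : 2 * c * (Real.cos φ * Real.cos ((α - β) / 2))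
      = 2 * c * Real.cos ((α + β) / 2) := by
    have lhs : 2 * c * (Real.cos φ * Real.cos ((α - β) / 2))
        = (1 + (b1 - a1) * (a2 + b2)) * Real.cos ((α - β) / 2) := by
      rw [← h2c]; ring
    rw [lhs, ha1, hb1, ha2, hb2, hc, ha1, hb1, ha2, hb2]
    field_simp
    linear_combination K
  exact mul_left_cancel₀ (by positivity : (2 : ℝ) * c ≠ 0) hmul
end

section
/- Let F1, F2 be distinct points in the plane and let P be a point on a branch of a hyperbola with foci F1, F2 (i.e., dist(P,F1) − dist(P,F2) constant), P ≠ F1, P ≠ F2, P not on segment F1F2. Then the tangent line to the hyperbola at P bisects the angle ∠F1PF2. -/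
open RealInnerProductSpace

theorem stmt9
    (F1 F2 P : EuclideanSpace ℝ (Fin 2))
    (hF : F1 ≠ F2) (hP1 : P ≠ F1) (hP2 : P ≠ F2)
    (hnotseg : P ∉ segment ℝ F1 F2)
    (u1 u2 : EuclideanSpace ℝ (Fin 2))
    (hu1 : u1 = (dist P F1)⁻¹ • (P - F1))
    (hu2 : u2 = (dist P F2)⁻¹ • (P - F2))
    -- v is a direction vector of the tangent line to the hyperbola at P
    (v : EuclideanSpace ℝ (Fin 2)) (hv : v ≠ 0)
    (htang : ⟪v, u1 - u2⟫ = 0) :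
    -- the tangent bisects the angle ∠F1PF2: equal angles with rays PF1 and PF2
    |⟪v, F1 - P⟫| * dist P F2 = |⟪v, F2 - P⟫| * dist P F1 := by
  have d1 : (0:ℝ) < dist P F1 := dist_pos.2 hP1
  have d2 : (0:ℝ) < dist P F2 := dist_pos.2 hP2
  set a := ⟪v, P - F1⟫ with ha
  set b := ⟪v, P - F2⟫ with hb
  have h : (dist P F1)⁻¹ * a = (dist P F2)⁻¹ * b := by
    have h0 := sub_eq_zero.1 (by rwa [inner_sub_right] at htang)
    rw [hu1, hu2, real_inner_smul_right, real_inner_smul_right] at h0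
    exact h0
  have h2 : a * dist P F2 = b * dist P F1 := by
    field_simp at h
    linarith
  have e1 : ⟪v, F1 - P⟫ = -a := by rw [← neg_sub P F1, inner_neg_right]
  have e2 : ⟪v, F2 - P⟫ = -b := by rw [← neg_sub P F2, inner_neg_right]
  rw [e1, e2, abs_neg, abs_neg]
  calc |a| * dist P F2 = |a * dist P F2| := by rw [abs_mul, abs_of_pos d2]
    _ = |b * dist P F1| := by rw [h2]
    _ = |b| * dist P F1 := by rw [abs_mul, abs_of_pos d1]
end

section
/- Let F1, F2 be distinct points and let P lie on a hyperbola branch H with foci F1, F2 (P not on line F1F2). If a billiard particle's incoming ray at P passes through F2, then the outgoing reflected ray lies on a line through F1 (the reflected ray, extended backwards, passes through F1). -/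
open RealInnerProductSpace

theorem stmt14
    (F1 F2 P : EuclideanSpace ℝ (Fin 2))
    (hF : F1 ≠ F2)
    (hncol : ¬ Collinear ℝ ({F1, F2, P} : Set (EuclideanSpace ℝ (Fin 2))))
    (u1 u2 n din r : EuclideanSpace ℝ (Fin 2))
    (hu1 : u1 = (dist P F1)⁻¹ • (P - F1))
    (hu2 : u2 = (dist P F2)⁻¹ • (P - F2))
    -- n is the normal to the hyperbola at P
    (hn : n = u1 - u2)
    -- incoming direction along the ray from F2 to P
    (hdin : din = (dist P F2)⁻¹ • (P - F2))
    -- r is the reflection of din across the tangent line at P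
    (hr : r = din - (2 * ⟪din, n⟫ / ⟪n, n⟫) • n) :
    -- the reflected ray lies on a line through F1
    SameRay ℝ r (P - F1) := by
  have hPF1 : P ≠ F1 := by
    rintro rfl
    exact hncol ((collinear_pair ℝ P F2).subset (by intro x hx; simp at hx ⊢; tauto))
  have hPF2 : P ≠ F2 := by
    rintro rfl
    exact hncol ((collinear_pair ℝ F1 P).subset (by intro x hx; simp at hx ⊢; tauto))
  have d1 : dist P F1 ≠ 0 := dist_ne_zero.2 hPF1
  have d2 : dist P F2 ≠ 0 := dist_ne_zero.2 hPF2
  have hnorm1 : ‖u1‖ = 1 := by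
    rw [hu1, norm_smul, ← dist_eq_norm, Real.norm_eq_abs,
      abs_of_nonneg (inv_nonneg.2 dist_nonneg), inv_mul_cancel₀ d1]
  have hnorm2 : ‖u2‖ = 1 := by
    rw [hu2, norm_smul, ← dist_eq_norm, Real.norm_eq_abs,
      abs_of_nonneg (inv_nonneg.2 dist_nonneg), inv_mul_cancel₀ d2]
  have h11 : ⟪u1, u1⟫ = 1 := by
    rw [real_inner_self_eq_norm_sq, hnorm1]; norm_num
  have h22 : ⟪u2, u2⟫ = 1 := by
    rw [real_inner_self_eq_norm_sq, hnorm2]; norm_num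
  have hne : n ≠ 0 := by
    intro h0
    have hu : u1 = u2 := by rw [hn, sub_eq_zero] at h0; exact h0
    rw [hu1, hu2] at hu
    have hF1eq : P - F1 = ((dist P F1) * (dist P F2)⁻¹) • (P - F2) := by
      have := congrArg (fun v => (dist P F1) • v) hu
      simpa [smul_smul, mul_inv_cancel₀ d1] using this
    apply hncol
    rw [collinear_iff_of_mem (show P ∈ ({F1, F2, P} : Set _) by simp)]
    refine ⟨P - F2, fun q hq => ?_⟩
    simp only [Set.mem_insert_iff, Set.mem_singleton_iff] at hq
    rcases hq with rfl | rfl | rfl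
    · exact ⟨-(dist P q * (dist P F2)⁻¹), by
        rw [vadd_eq_add]
        linear_combination (norm := module) (-1 : ℝ) • hF1eq⟩
    · exact ⟨-1, by rw [vadd_eq_add]; module⟩
    · exact ⟨0, by simp⟩
  have hdu : din = u2 := by rw [hdin, hu2]
  have key : ⟪n, n⟫ = -2 * ⟪din, n⟫ := by
    rw [hdu, hn]
    simp only [inner_sub_left, inner_sub_right, h11, h22, real_inner_comm u2 u1]
    ring
  have hnn : ⟪n, n⟫ ≠ 0 := by
    simpa using (inner_self_ne_zero (𝕜 := ℝ)).2 hne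
  have hx : ⟪din, n⟫ ≠ 0 := by
    intro h; rw [key, h] at hnn; simp at hnn
  have hcoef : 2 * ⟪din, n⟫ / ⟪n, n⟫ = -1 := by
    rw [key] at hnn ⊢
    rw [div_eq_iff hnn]; ring
  have hru : r = u1 := by
    rw [hr, hcoef, hdu, hn]; module
  rw [hru, hu1]
  exact SameRay.sameRay_nonneg_smul_left _ (inv_nonneg.2 dist_nonneg)
end
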